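/- Let A be symmetric positive definite and apply a Broyden-class method with exact line search and SPD initial matrix H₀ to the strictly convex quadratic q. If φ_k > φ_k^c for all k, then y_kᵀ H_k y_k > 0 at every iteration (so the condition y_kᵀH_ky_k ≠ 0 holds automatically), the proportionality recurrence γ_{k+1} = (γ_k g_kᵀH₀g_k + φ_k g_{k+1}ᵀH₀g_{k+1}) / (γ_k g_kᵀH₀g_k + g_{k+1}ᵀH₀g_{k+1}) holds with d_k = γ_k d_k^{PCG}, and quadratic termination occurs. -/

import Mathlib

open Matrix

variable {n : ℕ}

lemma vmv_mulVec (v w x : Fin n → ℝ) : vecMulVec v w *ᵥ x = (w ⬝ᵥ x) • v := by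
  ext i
  simp [Matrix.mulVec, Matrix.vecMulVec_apply, dotProduct, Finset.mul_sum, mul_comm, mul_assoc,
    mul_left_comm]

lemma herm_transpose {M : Matrix (Fin n) (Fin n) ℝ} (hM : M.IsHermitian) : Mᵀ = M := by
  ext i j
  have := congrFun (congrFun hM.eq i) j
  simpa [Matrix.conjTranspose_apply] using this

lemma symm_dot {M : Matrix (Fin n) (Fin n) ℝ} (hM : M.IsHermitian) (x y : Fin n → ℝ) :
    (M *ᵥ x) ⬝ᵥ y = x ⬝ᵥ (M *ᵥ y) := by
  rw [Matrix.dotProduct_mulVec, ← Matrix.mulVec_transpose, herm_transpose hM]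

lemma dot_swap {M : Matrix (Fin n) (Fin n) ℝ} (hM : M.IsHermitian) (x y : Fin n → ℝ) :
    x ⬝ᵥ (M *ᵥ y) = y ⬝ᵥ (M *ᵥ x) := by
  rw [← symm_dot hM y x, dotProduct_comm]

lemma pd_pos {M : Matrix (Fin n) (Fin n) ℝ} (hM : M.PosDef) {x : Fin n → ℝ} (hx : x ≠ 0) :
    0 < x ⬝ᵥ (M *ᵥ x) := by
  simpa using hM.dotProduct_mulVec_pos hx

lemma psd_nonneg {M : Matrix (Fin n) (Fin n) ℝ} (hM : M.PosDef) (x : Fin n → ℝ) :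
    0 ≤ x ⬝ᵥ (M *ᵥ x) := by
  simpa using hM.posSemidef.dotProduct_mulVec_nonneg x

lemma dot_quad {M : Matrix (Fin n) (Fin n) ℝ} (hM : M.IsHermitian) (z g y : Fin n → ℝ)
    (W CG CY : ℝ) :
    (W•z + CG•g + CY•y) ⬝ᵥ (M *ᵥ (W•z + CG•g + CY•y)) =
      W^2*(z⬝ᵥ(M*ᵥz)) + CG^2*(g⬝ᵥ(M*ᵥg)) + CY^2*(y⬝ᵥ(M*ᵥy))
      + 2*W*CG*(g⬝ᵥ(M*ᵥz)) + 2*W*CY*(y⬝ᵥ(M*ᵥz)) + 2*CG*CY*(g⬝ᵥ(M*ᵥy)) := by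
  have e1 : z ⬝ᵥ (M *ᵥ g) = g ⬝ᵥ (M *ᵥ z) := dot_swap hM z g
  have e2 : z ⬝ᵥ (M *ᵥ y) = y ⬝ᵥ (M *ᵥ z) := dot_swap hM z y
  have e3 : y ⬝ᵥ (M *ᵥ g) = g ⬝ᵥ (M *ᵥ y) := dot_swap hM y g
  simp only [Matrix.mulVec_add, Matrix.mulVec_smul, dotProduct_add, add_dotProduct,
    dotProduct_smul, smul_dotProduct, smul_eq_mul]
  rw [e1, e2, e3]
  ring

lemma update_mulVec (M : Matrix (Fin n) (Fin n) ℝ) (s w v z : Fin n → ℝ) (c₁ c₂ c₃ : ℝ) :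
    (M + c₁ • vecMulVec s s - c₂ • vecMulVec w w + c₃ • vecMulVec v v) *ᵥ z
      = M *ᵥ z + (c₁ * (s ⬝ᵥ z)) • s - (c₂ * (w ⬝ᵥ z)) • w + (c₃ * (v ⬝ᵥ z)) • v := by
  simp [Matrix.add_mulVec, Matrix.sub_mulVec, Matrix.smul_mulVec, vmv_mulVec,
    smul_smul, mul_comm]

lemma dot_update (M : Matrix (Fin n) (Fin n) ℝ) (s w v z : Fin n → ℝ) (c₁ c₂ c₃ : ℝ) :
    z ⬝ᵥ ((M + c₁ • vecMulVec s s - c₂ • vecMulVec w w + c₃ • vecMulVec v v) *ᵥ z)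
      = z ⬝ᵥ (M *ᵥ z) + c₁*(s ⬝ᵥ z)^2 - c₂*(w ⬝ᵥ z)^2 + c₃*(v ⬝ᵥ z)^2 := by
  rw [update_mulVec]
  simp only [dotProduct_add, dotProduct_sub, dotProduct_smul, smul_eq_mul]
  rw [dotProduct_comm z s, dotProduct_comm z w, dotProduct_comm z v]
  ring

lemma update_herm {M : Matrix (Fin n) (Fin n) ℝ} (hM : M.IsHermitian)
    (s w v : Fin n → ℝ) (c₁ c₂ c₃ : ℝ) :
    (M + c₁ • vecMulVec s s - c₂ • vecMulVec w w + c₃ • vecMulVec v v).IsHermitian := by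
  have hMt := herm_transpose hM
  show _ = _
  ext i j
  have : M j i = M i j := by
    have h := congrFun (congrFun hMt i) j
    simpa [Matrix.transpose_apply] using h
  simp [Matrix.conjTranspose_apply, Matrix.add_apply, Matrix.sub_apply, Matrix.smul_apply,
    Matrix.vecMulVec_apply, this]
  ring
lemma Gpos (ρ τ α φ p t : ℝ) (hρ : 0 < ρ) (hτ : 0 < τ) (hα : 0 < α)
    (hc : 0 < ρ + φ * τ) (hpt : p ≠ 0 ∨ t ≠ 0) :
    0 < (ρ+τ)*((ρ+φ*τ)*(ρ+τ)+α*ρ*τ)*p^2 - 2*ρ*(ρ+τ)*(ρ+φ*τ)*p*t + ρ^2*(ρ+φ*τ)*t^2 := by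
  rcases eq_or_ne p 0 with hp | hp
  · rcases hpt with h | ht
    · exact absurd hp h
    · subst hp
      have : 0 < ρ^2*(ρ+φ*τ)*t^2 := by positivity
      nlinarith [this]
  · have h4C : (0:ℝ) < 4*ρ^2*(ρ+φ*τ) := by positivity
    have hprod : (0:ℝ) < 4*α*ρ^3*τ*(ρ+τ)*(ρ+φ*τ)*p^2 := by
      have hp2 : (0:ℝ) < p^2 := by positivity
      have : (0:ℝ) < ρ + τ := by linarith
      positivity
    nlinarith [sq_nonneg (2*(ρ^2*(ρ+φ*τ))*t - 2*ρ*(ρ+τ)*(ρ+φ*τ)*p), h4C, hprod]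

lemma key_scalar (ρ τ α φ Q p t : ℝ) (hρ : 0 < ρ) (hτ : 0 < τ) (hα : 0 < α)
    (hc : 0 < ρ + φ * τ)
    (hS : 0 ≤ (τ*ρ)^2*Q + ((ρ+τ)*p - ρ*t)^2*ρ + (ρ*(p-t))^2*(ρ+τ)
        - 2*(τ*ρ)*((ρ+τ)*p - ρ*t)*p + 2*(τ*ρ)*(ρ*(p-t))*t - 2*((ρ+τ)*p - ρ*t)*(ρ*(p-t))*ρ)
    (hpt : p ≠ 0 ∨ t ≠ 0) :
    0 < Q + α*p^2/ρ - t^2/(ρ+τ) + φ*(ρ+τ)*(p/ρ - t/(ρ+τ))^2 := by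
  have hh : (0:ℝ) < ρ + τ := by linarith
  have hG := Gpos ρ τ α φ p t hρ hτ hα hc hpt
  have hid : Q + α*p^2/ρ - t^2/(ρ+τ) + φ*(ρ+τ)*(p/ρ - t/(ρ+τ))^2
      = ((τ*ρ)^2*Q + ((ρ+τ)*p - ρ*t)^2*ρ + (ρ*(p-t))^2*(ρ+τ)
        - 2*(τ*ρ)*((ρ+τ)*p - ρ*t)*p + 2*(τ*ρ)*(ρ*(p-t))*t - 2*((ρ+τ)*p - ρ*t)*(ρ*(p-t))*ρ)/(τ*ρ)^2
        + ((ρ+τ)*((ρ+φ*τ)*(ρ+τ)+α*ρ*τ)*p^2 - 2*ρ*(ρ+τ)*(ρ+φ*τ)*p*t + ρ^2*(ρ+φ*τ)*t^2)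
          /(ρ^2*τ*(ρ+τ)) := by
    field_simp
    ring
  rw [hid]
  have h1 : 0 ≤ ((τ*ρ)^2*Q + ((ρ+τ)*p - ρ*t)^2*ρ + (ρ*(p-t))^2*(ρ+τ)
        - 2*(τ*ρ)*((ρ+τ)*p - ρ*t)*p + 2*(τ*ρ)*(ρ*(p-t))*t - 2*((ρ+τ)*p - ρ*t)*(ρ*(p-t))*ρ)/(τ*ρ)^2 :=
    div_nonneg hS (by positivity)
  have h2 : 0 < ((ρ+τ)*((ρ+φ*τ)*(ρ+τ)+α*ρ*τ)*p^2 - 2*ρ*(ρ+τ)*(ρ+φ*τ)*p*t + ρ^2*(ρ+φ*τ)*t^2)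
          /(ρ^2*τ*(ρ+τ)) := div_pos hG (by positivity)
  linarith

lemma update_posdef {n : ℕ} (M : Matrix (Fin n) (Fin n) ℝ) (hM : M.PosDef)
    (g y s : Fin n → ℝ) (ρ τ α φ : ℝ)
    (hρ : 0 < ρ) (hτ : 0 < τ) (hα : 0 < α) (hc : 0 < ρ + φ * τ)
    (hgg : g ⬝ᵥ (M *ᵥ g) = ρ)
    (hgy : g ⬝ᵥ (M *ᵥ y) = -ρ)
    (hyy : y ⬝ᵥ (M *ᵥ y) = ρ + τ)
    (hs : s = α • (-(M *ᵥ g)))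
    (hsy : s ⬝ᵥ y = α * ρ) :
    (M + (1/(s ⬝ᵥ y)) • vecMulVec s s
       - (1/(y ⬝ᵥ (M *ᵥ y))) • vecMulVec (M *ᵥ y) (M *ᵥ y)
       + (φ * (y ⬝ᵥ (M *ᵥ y))) •
          vecMulVec ((1/(s ⬝ᵥ y)) • s - (1/(y ⬝ᵥ (M *ᵥ y))) • (M *ᵥ y))
            ((1/(s ⬝ᵥ y)) • s - (1/(y ⬝ᵥ (M *ᵥ y))) • (M *ᵥ y))).PosDef := by
  refine Matrix.posDef_iff_dotProduct_mulVec.mpr ⟨?_, ?_⟩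
  · exact update_herm hM.1 _ _ _ _ _ _
  · intro z hz
    simp only [star_trivial]
    rw [dot_update]
    set Q := z ⬝ᵥ (M *ᵥ z) with hQ
    have hQpos : 0 < Q := pd_pos hM hz
    set p := -(g ⬝ᵥ (M *ᵥ z)) with hp
    set t := y ⬝ᵥ (M *ᵥ z) with ht
    have hsz : s ⬝ᵥ z = α * p := by
      rw [hs, hp]
      simp only [smul_dotProduct, neg_dotProduct, smul_eq_mul, mul_neg]
      congr 1
      rw [symm_dot hM.1 g z]
    have hwz : (M *ᵥ y) ⬝ᵥ z = t := by rw [ht, symm_dot hM.1]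
    have hvz : ((1/(s ⬝ᵥ y)) • s - (1/(y ⬝ᵥ (M *ᵥ y))) • (M *ᵥ y)) ⬝ᵥ z
        = p/ρ - t/(ρ+τ) := by
      simp only [sub_dotProduct, smul_dotProduct, smul_eq_mul, hsz, hwz, hsy, hyy]
      have hαρ : α * ρ ≠ 0 := by positivity
      field_simp
    rw [hsz, hwz, hvz, hsy, hyy]
    have hαne : α ≠ 0 := ne_of_gt hα
    have hρne : ρ ≠ 0 := ne_of_gt hρ
    have h1 : 1/(α*ρ)*(α*p)^2 = α*p^2/ρ := by field_simp
    have h2 : 1/(ρ+τ)*t^2 = t^2/(ρ+τ) := by ring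
    rw [h1, h2]
    rcases eq_or_ne p 0 with hp0 | hp0
    · rcases eq_or_ne t 0 with ht0 | ht0
      · rw [hp0, ht0]
        simpa using hQpos
      · -- use key_scalar with hS
        apply key_scalar ρ τ α φ Q p t hρ hτ hα hc _ (Or.inr ht0)
        · have hw := hM.posSemidef.dotProduct_mulVec_nonneg ((τ*ρ)•z + ((ρ+τ)*p - ρ*t)•g + (ρ*(p-t))•y)
          simp only [star_trivial] at hw
          rw [dot_quad hM.1] at hw
          rw [hgg, hyy, hgy, ← hQ, ← ht] at hw
          have hgz : g ⬝ᵥ (M *ᵥ z) = -p := by rw [hp]; ring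
          rw [hgz] at hw
          nlinarith [hw]
    · apply key_scalar ρ τ α φ Q p t hρ hτ hα hc _ (Or.inl hp0)
      · have hw := hM.posSemidef.dotProduct_mulVec_nonneg ((τ*ρ)•z + ((ρ+τ)*p - ρ*t)•g + (ρ*(p-t))•y)
        simp only [star_trivial] at hw
        rw [dot_quad hM.1] at hw
        rw [hgg, hyy, hgy, ← hQ, ← ht] at hw
        have hgz : g ⬝ᵥ (M *ᵥ z) = -p := by rw [hp]; ring
        rw [hgz] at hw
        nlinarith [hw]

noncomputable def bgam (φ r : ℕ → ℝ) : ℕ → ℝ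
  | 0 => 1
  | k+1 => (bgam φ r k * r k + φ k * r (k+1)) / (bgam φ r k * r k + r (k+1))

open Matrix

set_option maxHeartbeats 1000000

/-- On a strictly convex quadratic, a Broyden-class method with
`φ k > φᶜ k` has positive curvature `y_kᵀ H_k y_k > 0` at every iteration, its
directions are proportional to the PCG directions with the explicit recurrence for the
coefficients, and quadratic termination occurs. -/
theorem broyden_pcg_strictly_convex
    (n : ℕ) (A H0 : Matrix (Fin n) (Fin n) ℝ) (b x0 : Fin n → ℝ)
    (hA : A.PosDef) (hH0 : H0.PosDef)
    -- PCG sequences with preconditioner H0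
    (xC dC gC : ℕ → Fin n → ℝ)
    (hgC : ∀ k, gC k = A *ᵥ xC k - b)
    (hxC0 : xC 0 = x0)
    (hdC0 : dC 0 = -(H0 *ᵥ gC 0))
    (hdC : ∀ k, dC (k+1) = -(H0 *ᵥ gC (k+1)) +
      ((gC (k+1) ⬝ᵥ (H0 *ᵥ gC (k+1))) / (gC k ⬝ᵥ (H0 *ᵥ gC k))) • dC k)
    (hxC : ∀ k, xC (k+1) = xC k +
      (-(gC k ⬝ᵥ dC k) / (dC k ⬝ᵥ (A *ᵥ dC k))) • dC k)
    -- Broyden-class method with exact line search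
    (φ : ℕ → ℝ)
    (xB dB sB yB gB : ℕ → Fin n → ℝ) (H : ℕ → Matrix (Fin n) (Fin n) ℝ)
    (hgB : ∀ k, gB k = A *ᵥ xB k - b)
    (hxB0 : xB 0 = x0)
    (hH00 : H 0 = H0)
    (hdB : ∀ k, dB k = -(H k *ᵥ gB k))
    (hxB : ∀ k, xB (k+1) = xB k +
      (-(gB k ⬝ᵥ dB k) / (dB k ⬝ᵥ (A *ᵥ dB k))) • dB k)
    (hsB : ∀ k, sB k = xB (k+1) - xB k)
    (hyB : ∀ k, yB k = A *ᵥ sB k)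
    (hH : ∀ k, H (k+1) = H k
      + (1 / (sB k ⬝ᵥ yB k)) • vecMulVec (sB k) (sB k)
      - (1 / (yB k ⬝ᵥ (H k *ᵥ yB k))) • vecMulVec (H k *ᵥ yB k) (H k *ᵥ yB k)
      + (φ k * (yB k ⬝ᵥ (H k *ᵥ yB k))) •
          vecMulVec
            ((1 / (sB k ⬝ᵥ yB k)) • sB k - (1 / (yB k ⬝ᵥ (H k *ᵥ yB k))) • (H k *ᵥ yB k))
            ((1 / (sB k ⬝ᵥ yB k)) • sB k - (1 / (yB k ⬝ᵥ (H k *ᵥ yB k))) • (H k *ᵥ yB k)))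
    -- the Broyden parameter exceeds the singular value at every iteration
    (hphi : ∀ k, φ k > (yB k ⬝ᵥ sB k) ^ 2 /
      ((yB k ⬝ᵥ sB k) ^ 2 - (yB k ⬝ᵥ (H k *ᵥ yB k)) * (sB k ⬝ᵥ ((H k)⁻¹ *ᵥ sB k)))) :
    -- positive curvature at every iteration (so y_kᵀH_ky_k ≠ 0 holds automatically)
    (∀ k, (∀ i, i ≤ k → gB i ≠ 0) → 0 < yB k ⬝ᵥ (H k *ᵥ yB k)) ∧
    -- proportionality with the explicit recurrence
    (∃ γ : ℕ → ℝ, γ 0 = 1 ∧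
      (∀ k, (∀ i, i ≤ k → gB i ≠ 0) → γ k ≠ 0 ∧ dB k = γ k • dC k) ∧
      (∀ k, (∀ i, i ≤ k + 1 → gB i ≠ 0) →
        γ (k+1) =
          (γ k * (gB k ⬝ᵥ (H0 *ᵥ gB k)) + φ k * (gB (k+1) ⬝ᵥ (H0 *ᵥ gB (k+1)))) /
          (γ k * (gB k ⬝ᵥ (H0 *ᵥ gB k)) + (gB (k+1) ⬝ᵥ (H0 *ᵥ gB (k+1)))))) ∧
    -- quadratic termination
    (∃ k, k ≤ n ∧ A *ᵥ xB k = b) := by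
  have hAH : A.IsHermitian := hA.1
  have hH0H : H0.IsHermitian := hH0.1
  set γ : ℕ → ℝ := bgam φ (fun k => gB k ⬝ᵥ (H0 *ᵥ gB k)) with hγ
  set αx : ℕ → ℝ := fun j => -(gB j ⬝ᵥ dB j) / (dB j ⬝ᵥ (A *ᵥ dB j)) with hαx
  -- basic one-step facts, given positive definiteness of `H j` and `gB j ≠ 0`
  have hstep : ∀ j, gB j ≠ 0 → (H j).PosDef →
      dB j ≠ 0 ∧
      0 < dB j ⬝ᵥ (A *ᵥ dB j) ∧
      0 < gB j ⬝ᵥ (H j *ᵥ gB j) ∧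
      gB j ⬝ᵥ dB j = -(gB j ⬝ᵥ (H j *ᵥ gB j)) ∧
      0 < αx j ∧
      gB (j+1) = gB j + αx j • (A *ᵥ dB j) ∧
      sB j = αx j • dB j ∧
      yB j = αx j • (A *ᵥ dB j) ∧
      gB (j+1) ⬝ᵥ dB j = 0 ∧
      αx j * (dB j ⬝ᵥ (A *ᵥ dB j)) = gB j ⬝ᵥ (H j *ᵥ gB j) := by
    intro j hg hpd
    have hρ : 0 < gB j ⬝ᵥ (H j *ᵥ gB j) := pd_pos hpd hg
    have hgd : gB j ⬝ᵥ dB j = -(gB j ⬝ᵥ (H j *ᵥ gB j)) := by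
      rw [hdB j, dotProduct_neg]
    have hdne : dB j ≠ 0 := by
      intro h0
      rw [h0] at hgd
      simp at hgd
      rw [hgd] at hρ
      exact lt_irrefl _ hρ
    have hκ : 0 < dB j ⬝ᵥ (A *ᵥ dB j) := pd_pos hA hdne
    have hα : 0 < αx j := by
      rw [hαx]
      simp only [hgd, neg_neg]
      exact div_pos hρ hκ
    have hxj : xB (j+1) = xB j + αx j • dB j := hxB j
    have hgj : gB (j+1) = gB j + αx j • (A *ᵥ dB j) := by
      rw [hgB (j+1), hxj, Matrix.mulVec_add, Matrix.mulVec_smul, hgB j]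
      abel
    have hsj : sB j = αx j • dB j := by rw [hsB j, hxj]; abel
    have hyj : yB j = αx j • (A *ᵥ dB j) := by rw [hyB j, hsj, Matrix.mulVec_smul]
    have hαμ : αx j * (dB j ⬝ᵥ (A *ᵥ dB j)) = gB j ⬝ᵥ (H j *ᵥ gB j) := by
      rw [hαx]
      simp only [hgd, neg_neg]
      field_simp
    have hexact : gB (j+1) ⬝ᵥ dB j = 0 := by
      rw [hgj, add_dotProduct, smul_dotProduct, smul_eq_mul,
        symm_dot hAH (dB j) (dB j), hgd, hαμ]
      ring
    exact ⟨hdne, hκ, hρ, hgd, hα, hgj, hsj, hyj, hexact, hαμ⟩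
  -- the big invariant
  have main : ∀ k, (∀ i, i ≤ k → gB i ≠ 0) →
      ((H k).PosDef ∧ xB k = xC k ∧ dB k = γ k • dC k ∧ 0 < γ k ∧
       gB k ⬝ᵥ (H k *ᵥ gB k) = γ k * (gB k ⬝ᵥ (H0 *ᵥ gB k)) ∧
       (∀ i, i < k → dB k ⬝ᵥ (A *ᵥ dB i) = 0) ∧
       (∀ i, i < k → gB k ⬝ᵥ dB i = 0) ∧
       (∀ i, i < k → gB k ⬝ᵥ (H0 *ᵥ gB i) = 0) ∧
       (∀ z, (∀ i, i ≤ k → dB i ⬝ᵥ z = 0) → H k *ᵥ z = H0 *ᵥ z)) := by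
    intro k
    induction k using Nat.strong_induction_on with
    | _ k IH =>
      match k with
      | 0 =>
        intro _
        have hg0 : gC 0 = gB 0 := by rw [hgC, hgB, hxC0, hxB0]
        have hd0 : dB 0 = dC 0 := by rw [hdB 0, hH00, hdC0, hg0]
        refine ⟨hH00 ▸ hH0, by rw [hxC0, hxB0], ?_, ?_, ?_, ?_, ?_, ?_, ?_⟩
        · show dB 0 = bgam φ _ 0 • dC 0
          rw [bgam, one_smul, hd0]
        · show (0:ℝ) < bgam φ _ 0
          rw [bgam]; norm_num
        · show _ = bgam φ _ 0 * _
          rw [bgam, hH00, one_mul]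
        · intro i hi; omega
        · intro i hi; omega
        · intro i hi; omega
        · intro z _; rw [hH00]
      | (k+1) =>
        intro hguard
        have hguardk : ∀ i, i ≤ k → gB i ≠ 0 := fun i hi => hguard i (by omega)
        obtain ⟨pd, xeq, deq, γpos, rhoEq, conj, orth, gorth, expn⟩ :=
          IH k (by omega) hguardk
        obtain ⟨hdne, hκ, hρ, hgd, hα, hgj, hsj, hyj, hexact, hαμ⟩ :=
          hstep k (hguardk k le_rfl) pd
        have hMH : (H k).IsHermitian := pd.1
        have hgP : gB (k+1) ≠ 0 := hguard (k+1) le_rfl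
        have orthP : ∀ i, i ≤ k → gB (k+1) ⬝ᵥ dB i = 0 := by
          intro i hi
          rcases eq_or_lt_of_le hi with rfl | hik
          · exact hexact
          · rw [hgj, add_dotProduct, smul_dotProduct, smul_eq_mul,
              symm_dot hAH (dB k) (dB i), orth i hik, conj i hik]
            ring
        have hdCval : ∀ m, m ≤ k → dC m = (γ m)⁻¹ • dB m := by
          intro m hm
          obtain ⟨_, _, deqm, γposm, _⟩ := IH m (by omega) (fun i hi => hguard i (by omega))
          rw [deqm, smul_smul, inv_mul_cancel₀ (ne_of_gt γposm), one_smul]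
        have hgCB : ∀ m, m ≤ k → gC m = gB m := by
          intro m hm
          obtain ⟨_, xeqm, _⟩ := IH m (by omega) (fun i hi => hguard i (by omega))
          rw [hgC, hgB, xeqm]
        have gorthP : ∀ j, j ≤ k → gB (k+1) ⬝ᵥ (H0 *ᵥ gB j) = 0 := by
          intro j hj
          match j, hj with
          | 0, hj =>
            have hγ0 : γ 0 = 1 := by rw [hγ]; rfl
            have hd0 : dC 0 = dB 0 := by rw [hdCval 0 (by omega), hγ0, inv_one, one_smul]
            have h0 : H0 *ᵥ gB 0 = -(dB 0) := by
              rw [← hd0, ← hgCB 0 (by omega), hdC0, neg_neg]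
            rw [h0, dotProduct_neg, orthP 0 (by omega), neg_zero]
          | (m+1), hj =>
            have hc := hdC m
            rw [hgCB (m+1) hj, hgCB m (by omega)] at hc
            have e : H0 *ᵥ gB (m+1)
                = ((gB (m+1) ⬝ᵥ (H0 *ᵥ gB (m+1))) / (gB m ⬝ᵥ (H0 *ᵥ gB m))) • dC m
                  - dC (m+1) := by
              rw [hc]; abel
            rw [e, hdCval m (by omega), hdCval (m+1) hj, dotProduct_sub]
            simp only [dotProduct_smul, smul_eq_mul]
            rw [orthP m (by omega), orthP (m+1) hj]
            ring
        have HgP : H k *ᵥ gB (k+1) = H0 *ᵥ gB (k+1) :=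
          expn _ (fun i hi => by rw [dotProduct_comm]; exact orthP i hi)
        have τeq : gB (k+1) ⬝ᵥ (H k *ᵥ gB (k+1)) = gB (k+1) ⬝ᵥ (H0 *ᵥ gB (k+1)) := by
          rw [HgP]
        have τpos : 0 < gB (k+1) ⬝ᵥ (H0 *ᵥ gB (k+1)) := pd_pos hH0 hgP
        have rkpos : 0 < gB k ⬝ᵥ (H0 *ᵥ gB k) := pd_pos hH0 (hguardk k le_rfl)
        have hyg : yB k = gB (k+1) - gB k := by rw [hyj, hgj]; abel
        have hMg : H k *ᵥ gB k = -(dB k) := by rw [hdB k, neg_neg]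
        have hMy : H k *ᵥ yB k = H0 *ᵥ gB (k+1) + dB k := by
          rw [hyg, Matrix.mulVec_sub, HgP, hMg]
          abel
        have hgMy : gB k ⬝ᵥ (H k *ᵥ yB k) = -(gB k ⬝ᵥ (H k *ᵥ gB k)) := by
          rw [hMy, dotProduct_add, dot_swap hH0H (gB k) (gB (k+1)), gorthP k le_rfl, hgd]
          ring
        have e1 : gB (k+1) ⬝ᵥ (H k *ᵥ yB k) = gB (k+1) ⬝ᵥ (H0 *ᵥ gB (k+1)) := by
          rw [hMy, dotProduct_add, orthP k le_rfl, add_zero]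
        have hyMy : yB k ⬝ᵥ (H k *ᵥ yB k)
            = (gB k ⬝ᵥ (H k *ᵥ gB k)) + (gB (k+1) ⬝ᵥ (H0 *ᵥ gB (k+1))) := by
          have h' : yB k ⬝ᵥ (H k *ᵥ yB k) = (gB (k+1) - gB k) ⬝ᵥ (H k *ᵥ yB k) := by
            rw [← hyg]
          rw [h', sub_dotProduct, e1, hgMy]
          ring
        have hsy' : sB k ⬝ᵥ yB k = αx k * (gB k ⬝ᵥ (H k *ᵥ gB k)) := by
          rw [hsj, hyj, smul_dotProduct, dotProduct_smul, smul_eq_mul, smul_eq_mul, ← hαμ]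
        have hys : yB k ⬝ᵥ sB k = αx k * (gB k ⬝ᵥ (H k *ᵥ gB k)) := by
          rw [dotProduct_comm, hsy']
        have hMinv : (H k)⁻¹ *ᵥ sB k = (-(αx k)) • gB k := by
          have hdet : IsUnit (H k).det := isUnit_iff_ne_zero.mpr (ne_of_gt pd.det_pos)
          have hs' : sB k = H k *ᵥ ((-(αx k)) • gB k) := by
            rw [Matrix.mulVec_smul, hsj, hdB k]
            simp [neg_smul, smul_neg]
          rw [hs', Matrix.mulVec_mulVec, Matrix.nonsing_inv_mul _ hdet, Matrix.one_mulVec]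
        have hsHs : sB k ⬝ᵥ ((H k)⁻¹ *ᵥ sB k)
            = αx k * αx k * (gB k ⬝ᵥ (H k *ᵥ gB k)) := by
          rw [hMinv, dotProduct_smul, hsj, smul_dotProduct, smul_eq_mul, smul_eq_mul,
            dotProduct_comm (dB k) (gB k), hgd]
          ring
        have hc : 0 < (gB k ⬝ᵥ (H k *ᵥ gB k))
            + φ k * (gB (k+1) ⬝ᵥ (H0 *ᵥ gB (k+1))) := by
          have hp := hphi k
          rw [hys, hyMy, hsHs] at hp
          have hαne : αx k ≠ 0 := ne_of_gt hα
          have hρne : gB k ⬝ᵥ (H k *ᵥ gB k) ≠ 0 := ne_of_gt hρ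
          have hτne : gB (k+1) ⬝ᵥ (H0 *ᵥ gB (k+1)) ≠ 0 := ne_of_gt τpos
          have hval : (αx k * (gB k ⬝ᵥ (H k *ᵥ gB k)))^2
              / ((αx k * (gB k ⬝ᵥ (H k *ᵥ gB k)))^2
                - ((gB k ⬝ᵥ (H k *ᵥ gB k)) + (gB (k+1) ⬝ᵥ (H0 *ᵥ gB (k+1))))
                  * (αx k * αx k * (gB k ⬝ᵥ (H k *ᵥ gB k))))
              = -((gB k ⬝ᵥ (H k *ᵥ gB k)) / (gB (k+1) ⬝ᵥ (H0 *ᵥ gB (k+1)))) := by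
            rw [show (αx k * (gB k ⬝ᵥ (H k *ᵥ gB k)))^2
                - ((gB k ⬝ᵥ (H k *ᵥ gB k)) + (gB (k+1) ⬝ᵥ (H0 *ᵥ gB (k+1))))
                  * (αx k * αx k * (gB k ⬝ᵥ (H k *ᵥ gB k)))
                = -(αx k^2 * (gB k ⬝ᵥ (H k *ᵥ gB k)) * (gB (k+1) ⬝ᵥ (H0 *ᵥ gB (k+1))))
              from by ring]
            field_simp
          rw [hval] at hp
          rw [gt_iff_lt, neg_lt] at hp
          have h2 : -(φ k) < (gB k ⬝ᵥ (H k *ᵥ gB k)) / (gB (k+1) ⬝ᵥ (H0 *ᵥ gB (k+1))) := hp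
          rw [lt_div_iff₀ τpos] at h2
          nlinarith [h2]
        have pdP : (H (k+1)).PosDef := by
          rw [hH k]
          exact update_posdef (H k) pd (gB k) (yB k) (sB k)
            (gB k ⬝ᵥ (H k *ᵥ gB k)) (gB (k+1) ⬝ᵥ (H0 *ᵥ gB (k+1))) (αx k) (φ k)
            hρ τpos hα hc rfl hgMy hyMy
            (by rw [hsj, hdB k]) hsy'
        -- the new gamma value
        have hγsucc : γ (k+1)
            = (γ k * (gB k ⬝ᵥ (H0 *ᵥ gB k)) + φ k * (gB (k+1) ⬝ᵥ (H0 *ᵥ gB (k+1))))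
              / (γ k * (gB k ⬝ᵥ (H0 *ᵥ gB k)) + (gB (k+1) ⬝ᵥ (H0 *ᵥ gB (k+1)))) := by
          rw [hγ]
          rfl
        have hnum : 0 < γ k * (gB k ⬝ᵥ (H0 *ᵥ gB k))
            + φ k * (gB (k+1) ⬝ᵥ (H0 *ᵥ gB (k+1))) := by
          rw [← rhoEq]; exact hc
        have hden : 0 < γ k * (gB k ⬝ᵥ (H0 *ᵥ gB k)) + (gB (k+1) ⬝ᵥ (H0 *ᵥ gB (k+1))) := by
          have := mul_pos γpos rkpos
          linarith
        have γPpos : 0 < γ (k+1) := by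
          rw [hγsucc]; exact div_pos hnum hden
        have hγkne : γ k ≠ 0 := ne_of_gt γpos
        have hrkne : gB k ⬝ᵥ (H0 *ᵥ gB k) ≠ 0 := ne_of_gt rkpos
        have hτne : gB (k+1) ⬝ᵥ (H0 *ᵥ gB (k+1)) ≠ 0 := ne_of_gt τpos
        have hαne : αx k ≠ 0 := ne_of_gt hα
        have hκne : dB k ⬝ᵥ (A *ᵥ dB k) ≠ 0 := ne_of_gt hκ
        have hρne : gB k ⬝ᵥ (H k *ᵥ gB k) ≠ 0 := ne_of_gt hρ
        -- x-iterates agree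
        have xeqP : xB (k+1) = xC (k+1) := by
          rw [hxB k, hxC k, ← xeq, hgCB k le_rfl, hdCval k le_rfl]
          congr 1
          simp only [dotProduct_smul, smul_dotProduct, Matrix.mulVec_smul, smul_eq_mul,
            smul_smul]
          match_scalars
          field_simp
        have gCP : gC (k+1) = gB (k+1) := by rw [hgC, hgB, xeqP]
        have hdCs := hdC k
        rw [gCP, hgCB k le_rfl, hdCval k le_rfl] at hdCs
        have hdg : dB k ⬝ᵥ gB (k+1) = 0 := by
          rw [dotProduct_comm]; exact orthP k le_rfl
        have hug : (H0 *ᵥ gB (k+1)) ⬝ᵥ gB (k+1) = gB (k+1) ⬝ᵥ (H0 *ᵥ gB (k+1)) :=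
          symm_dot hH0H _ _
        -- the key direction formula
        have hdBP : dB (k+1) = γ (k+1) • dC (k+1) := by
          rw [hdB (k+1), hH k, update_mulVec, hdCs, hγsucc, hsy', hyMy, HgP, hMy, hsj]
          simp only [smul_dotProduct, add_dotProduct, sub_dotProduct, smul_eq_mul, smul_smul,
            hdg, hug]
          match_scalars
          · rw [rhoEq]
            field_simp
            ring
          · rw [rhoEq]
            field_simp
            ring
        have rhoEqP : gB (k+1) ⬝ᵥ (H (k+1) *ᵥ gB (k+1))
            = γ (k+1) * (gB (k+1) ⬝ᵥ (H0 *ᵥ gB (k+1))) := by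
          have hMgP : H (k+1) *ᵥ gB (k+1) = -(dB (k+1)) := by rw [hdB (k+1), neg_neg]
          rw [hMgP, dotProduct_neg, hdBP, hdCs]
          simp only [dotProduct_smul, dotProduct_add, dotProduct_neg, smul_eq_mul]
          rw [orthP k le_rfl]
          ring
        -- conjugacy at level k+1
        have hadk : A *ᵥ dB k = (αx k)⁻¹ • (gB (k+1) - gB k) := by
          rw [hgj, add_sub_cancel_left, smul_smul, inv_mul_cancel₀ hαne, one_smul]
        have hu0 : ∀ m, m ≤ k → (H0 *ᵥ gB (k+1)) ⬝ᵥ gB m = 0 := by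
          intro m hm
          rw [symm_dot hH0H]
          exact gorthP m hm
        have conjP : ∀ i, i < k+1 → dB (k+1) ⬝ᵥ (A *ᵥ dB i) = 0 := by
          intro i hik
          have hi' : i ≤ k := by omega
          rcases eq_or_lt_of_le hi' with hik | hlt
          · -- i = k
            rw [hik]
            have hT1 : (H0 *ᵥ gB (k+1)) ⬝ᵥ (A *ᵥ dB k)
                = (αx k)⁻¹ * (gB (k+1) ⬝ᵥ (H0 *ᵥ gB (k+1))) := by
              rw [hadk, dotProduct_smul, dotProduct_sub, hug, hu0 k le_rfl, smul_eq_mul]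
              ring
            rw [hdBP, hdCs]
            simp only [smul_dotProduct, add_dotProduct, neg_dotProduct, smul_eq_mul]
            rw [hT1]
            have hakr : αx k * (dB k ⬝ᵥ (A *ᵥ dB k))
                = γ k * (gB k ⬝ᵥ (H0 *ᵥ gB k)) := hαμ.trans rhoEq
            have hinner : -((αx k)⁻¹ * (gB (k+1) ⬝ᵥ (H0 *ᵥ gB (k+1))))
                + (gB (k+1) ⬝ᵥ (H0 *ᵥ gB (k+1))) / (gB k ⬝ᵥ (H0 *ᵥ gB k))
                  * ((γ k)⁻¹ * (dB k ⬝ᵥ (A *ᵥ dB k))) = 0 := by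
              field_simp
              nlinarith [hakr]
            linear_combination (γ (k+1)) * hinner
          · -- i < k
            obtain ⟨pdi, _⟩ := IH i (by omega) (fun m hm => hguard m (by omega))
            obtain ⟨_, hκi, _, _, hαi, hgji, _, _, _, _⟩ :=
              hstep i (hguard i (by omega)) pdi
            have hadi : A *ᵥ dB i = (αx i)⁻¹ • (gB (i+1) - gB i) := by
              rw [hgji, add_sub_cancel_left, smul_smul, inv_mul_cancel₀ (ne_of_gt hαi),
                one_smul]
            have hT1 : (H0 *ᵥ gB (k+1)) ⬝ᵥ (A *ᵥ dB i) = 0 := by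
              rw [hadi, dotProduct_smul, dotProduct_sub, hu0 (i+1) (by omega),
                hu0 i (by omega), smul_eq_mul]
              ring
            rw [hdBP, hdCs]
            simp only [smul_dotProduct, add_dotProduct, neg_dotProduct, smul_eq_mul]
            rw [hT1, conj i hlt]
            ring
        -- expansion property at level k+1
        have expP : ∀ z, (∀ i, i ≤ k+1 → dB i ⬝ᵥ z = 0) → H (k+1) *ᵥ z = H0 *ᵥ z := by
          intro z hz
          have hzk : ∀ i, i ≤ k → dB i ⬝ᵥ z = 0 := fun i hi => hz i (by omega)
          have hMz : H k *ᵥ z = H0 *ᵥ z := expn z hzk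
          have hdCPinv : dC (k+1) = (γ (k+1))⁻¹ • dB (k+1) := by
            rw [hdBP, smul_smul, inv_mul_cancel₀ (ne_of_gt γPpos), one_smul]
          have huexp : H0 *ᵥ gB (k+1)
              = ((gB (k+1) ⬝ᵥ (H0 *ᵥ gB (k+1))) / (gB k ⬝ᵥ (H0 *ᵥ gB k)))
                  • ((γ k)⁻¹ • dB k) - dC (k+1) := by
            rw [hdCs]; abel
          have huz : (H0 *ᵥ gB (k+1)) ⬝ᵥ z = 0 := by
            rw [huexp, hdCPinv]
            simp only [sub_dotProduct, smul_dotProduct, smul_eq_mul]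
            rw [hzk k le_rfl, hz (k+1) le_rfl]
            ring
          have hsz : sB k ⬝ᵥ z = 0 := by
            rw [hsj, smul_dotProduct, hzk k le_rfl, smul_eq_mul, mul_zero]
          have hwz : (H k *ᵥ yB k) ⬝ᵥ z = 0 := by
            rw [hMy, add_dotProduct, huz, hzk k le_rfl, add_zero]
          have hvz : ((1 / (sB k ⬝ᵥ yB k)) • sB k
              - (1 / (yB k ⬝ᵥ (H k *ᵥ yB k))) • (H k *ᵥ yB k)) ⬝ᵥ z = 0 := by
            simp only [sub_dotProduct, smul_dotProduct, smul_eq_mul]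
            rw [hsz, hwz]
            ring
          rw [hH k, update_mulVec, hMz, hsz, hwz, hvz]
          simp
        refine ⟨pdP, xeqP, hdBP, γPpos, rhoEqP, conjP,
          fun i hi => orthP i (by omega), fun i hi => gorthP i (by omega), expP⟩
  refine ⟨?_, ⟨γ, ?_, ?_, ?_⟩, ?_⟩
  · -- positive curvature
    intro k hg
    obtain ⟨pd, _⟩ := main k hg
    obtain ⟨hdne, hκ, hρ, hgd, hα, hgj, hsj, hyj, hexact, hαμ⟩ := hstep k (hg k le_rfl) pd
    have hyg : yB k = gB (k+1) - gB k := by rw [hyj, hgj]; abel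
    have hMg : H k *ᵥ gB k = -(dB k) := by rw [hdB k, neg_neg]
    have h2 : gB (k+1) ⬝ᵥ (H k *ᵥ gB k) = 0 := by
      rw [hMg, dotProduct_neg, hexact, neg_zero]
    have h3 : gB k ⬝ᵥ (H k *ᵥ gB (k+1)) = 0 := by
      rw [dot_swap pd.1, h2]
    have hτ' : 0 ≤ gB (k+1) ⬝ᵥ (H k *ᵥ gB (k+1)) := psd_nonneg pd _
    have hval : yB k ⬝ᵥ (H k *ᵥ yB k)
        = gB (k+1) ⬝ᵥ (H k *ᵥ gB (k+1)) + gB k ⬝ᵥ (H k *ᵥ gB k) := by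
      rw [hyg]
      simp only [Matrix.mulVec_sub, dotProduct_sub, sub_dotProduct]
      rw [h2, h3]
      ring
    rw [hval]
    linarith
  · -- γ 0 = 1
    rw [hγ]; rfl
  · -- proportionality
    intro k hg
    obtain ⟨_, _, deq, γpos, _⟩ := main k hg
    exact ⟨ne_of_gt γpos, deq⟩
  · -- recurrence
    intro k _
    rw [hγ]; rfl
  · -- quadratic termination
    by_cases hterm : ∀ i, i ≤ n → gB i ≠ 0
    · exfalso
      have sum_dot : ∀ (s : Finset (Fin (n+1))) (f : Fin (n+1) → Fin n → ℝ)
          (v : Fin n → ℝ), (∑ i ∈ s, f i) ⬝ᵥ v = ∑ i ∈ s, f i ⬝ᵥ v := by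
        intro s f v
        induction s using Finset.induction with
        | empty => simp
        | insert _ _ h ih => simp [Finset.sum_insert h, add_dotProduct, ih]
      have li : LinearIndependent ℝ (fun i : Fin (n+1) => gB i.1) := by
        rw [linearIndependent_iff']
        intro s c hsum j hj
        have h0 := congrArg (fun w => w ⬝ᵥ (H0 *ᵥ gB j.1)) hsum
        simp only [sum_dot, zero_dotProduct, smul_dotProduct, smul_eq_mul] at h0
        have hoff : ∀ i ∈ s, i ≠ j → c i * (gB i.1 ⬝ᵥ (H0 *ᵥ gB j.1)) = 0 := by
          intro i _ hij
          have hij' : i.1 ≠ j.1 := fun h => hij (Fin.ext h)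
          rcases lt_or_gt_of_ne hij' with hlt | hgt
          · have := (main j.1 (fun m hm => hterm m (by omega))).2.2.2.2.2.2.2.1 i.1 hlt
            rw [dot_swap hH0.1, this, mul_zero]
          · have := (main i.1 (fun m hm => hterm m (by omega))).2.2.2.2.2.2.2.1 j.1 hgt
            rw [this, mul_zero]
        have hsingle := Finset.sum_eq_single_of_mem j hj hoff
        rw [hsingle] at h0
        have hrj : 0 < gB j.1 ⬝ᵥ (H0 *ᵥ gB j.1) :=
          pd_pos hH0 (hterm j.1 (by omega))
        rcases mul_eq_zero.mp h0 with h | h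
        · exact h
        · exact absurd h (ne_of_gt hrj)
      have hcard := li.fintype_card_le_finrank
      rw [Module.finrank_fin_fun, Fintype.card_fin] at hcard
      omega
    · push_neg at hterm
      obtain ⟨i, hi, hgi⟩ := hterm
      refine ⟨i, hi, ?_⟩
      rw [hgB i] at hgi
      exact sub_eq_zero.mp hgi
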